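/- For all vectors v, w in ℂ^n, the quantity ‖v‖²‖w‖² − |⟨v, w⟩|² is bounded below by ‖v ⊙ v̄‖·‖w ⊙ w̄‖ − ⟨v ⊙ v̄, w ⊙ w̄⟩, where ⊙ denotes the entrywise (Hadamard) product and v̄ the entrywise complex conjugate. That is, ‖v ⊙ v̄‖‖w ⊙ w̄‖ − ⟨v ⊙ v̄, w ⊙ w̄⟩ ≤ ‖v‖²‖w‖² − |⟨v, w⟩|². -/

import Mathlib

open Finset Complex

private lemma lagrange_aux {n : ℕ} (x y : Fin n → ℝ) :
    ∑ i, ∑ j, (x i * y j - x j * y i)^2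
      = 2*((∑ i, x i^2) * (∑ i, y i^2) - (∑ i, x i * y i)^2) := by
  have h : ∀ i, ∑ j, (x i * y j - x j * y i)^2
      = x i^2 * (∑ j, y j^2) - x i * y i * (2 * (∑ j, x j * y j)) + y i^2 * (∑ j, x j^2) := by
    intro i
    simp only [Finset.mul_sum, mul_left_comm (2:ℝ), ← Finset.sum_sub_distrib,
      ← Finset.sum_add_distrib]
    apply Finset.sum_congr rfl
    intros; ring
  simp only [h]
  rw [Finset.sum_add_distrib, Finset.sum_sub_distrib, ← Finset.sum_mul, ← Finset.sum_mul,
    ← Finset.sum_mul]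
  ring

private lemma pair_le_sum {n : ℕ} (f : Fin n → ℝ) (hf : ∀ i, 0 ≤ f i) {i j : Fin n}
    (hij : i ≠ j) : f i + f j ≤ ∑ k, f k := by
  rw [← Finset.sum_pair hij]
  exact Finset.sum_le_sum_of_subset_of_nonneg (Finset.subset_univ _) (fun k _ _ => hf k)

private lemma core_ineq {n : ℕ} (p q : Fin n → ℝ) (hp : ∀ i, 0 ≤ p i) (hq : ∀ i, 0 ≤ q i) :
    Real.sqrt (∑ i, p i^4) * Real.sqrt (∑ i, q i^4) - ∑ i, p i^2 * q i^2
      ≤ (∑ i, p i^2) * (∑ i, q i^2) - (∑ i, p i * q i)^2 := by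
  set X := ∑ i, p i^4 with hXdef
  set Y := ∑ i, q i^4 with hYdef
  set Z := ∑ i, p i^2 * q i^2 with hZdef
  have hX : 0 ≤ X := Finset.sum_nonneg fun i _ => by positivity
  have hY : 0 ≤ Y := Finset.sum_nonneg fun i _ => by positivity
  have hZ : 0 ≤ Z := Finset.sum_nonneg fun i _ => by positivity
  set D := Real.sqrt X * Real.sqrt Y + Z with hDdef
  have hsq : (Real.sqrt X * Real.sqrt Y)^2 = X * Y := by
    rw [mul_pow, Real.sq_sqrt hX, Real.sq_sqrt hY]
  have hDnn : 0 ≤ D := by positivity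
  -- termwise bound
  have term : ∀ i j, ((p i)^2 * (q j)^2 - (p j)^2 * (q i)^2)^2
      ≤ (p i * q j - p j * q i)^2 * D := by
    intro i j
    rcases eq_or_ne i j with rfl | hij
    · simp
    · have hb1 : p i^2 * q j^2 + p j^2 * q i^2 ≤ Real.sqrt X * Real.sqrt Y := by
        rw [← Real.sqrt_mul hX]
        have h1 : p i^4 + p j^4 ≤ X := by
          rw [hXdef]; exact pair_le_sum (fun k => p k^4) (fun k => by positivity) hij
        have h2 : q i^4 + q j^4 ≤ Y := by
          rw [hYdef]; exact pair_le_sum (fun k => q k^4) (fun k => by positivity) hij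
        have hnn : (0:ℝ) ≤ p i^2 * q j^2 + p j^2 * q i^2 := by positivity
        have hsq2 : (p i^2 * q j^2 + p j^2 * q i^2)^2 ≤ X * Y := by
          nlinarith [sq_nonneg (p i^2 * q i^2 - p j^2 * q j^2), sq_nonneg (p i^2), sq_nonneg (q j^2),
            mul_nonneg (pow_nonneg (hp i) 4) (pow_nonneg (hq i) 4),
            mul_le_mul h1 h2 (by positivity) hX]
        exact (Real.le_sqrt hnn ((sq_nonneg _).trans hsq2)).mpr hsq2
      have hb2 : p i^2 * q i^2 + p j^2 * q j^2 ≤ Z := by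
        rw [hZdef]; exact pair_le_sum (fun k => p k^2 * q k^2) (fun k => by positivity) hij
      have hb3 : (p i * q j + p j * q i)^2 ≤ D := by
        nlinarith [sq_nonneg (p i * q i - p j * q j)]
      have key : ((p i)^2 * (q j)^2 - (p j)^2 * (q i)^2)^2
          = (p i * q j - p j * q i)^2 * (p i * q j + p j * q i)^2 := by ring
      rw [key]
      exact mul_le_mul_of_nonneg_left hb3 (sq_nonneg _)
  -- sum the termwise bound
  have key2 : X * Y - Z^2 ≤ ((∑ i, p i^2) * (∑ i, q i^2) - (∑ i, p i * q i)^2) * D := by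
    have hL := lagrange_aux (fun i => p i^2) (fun i => q i^2)
    have hR := lagrange_aux p q
    simp only [← pow_mul] at hL
    norm_num at hL
    have hsum : ∑ i, ∑ j, ((p i)^2 * (q j)^2 - (p j)^2 * (q i)^2)^2
        ≤ ∑ i, ∑ j, (p i * q j - p j * q i)^2 * D :=
      Finset.sum_le_sum fun i _ => Finset.sum_le_sum fun j _ => term i j
    have hpull : ∑ i, ∑ j, (p i * q j - p j * q i)^2 * D
        = (∑ i, ∑ j, (p i * q j - p j * q i)^2) * D := by
      rw [Finset.sum_mul]
      exact Finset.sum_congr rfl fun i _ => (Finset.sum_mul _ _ _).symm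
    rw [hpull, hR] at hsum
    rw [hL] at hsum
    linarith
  -- conclude
  rcases eq_or_lt_of_le hDnn with hD0 | hDpos
  · have h1 : Real.sqrt X * Real.sqrt Y = 0 ∧ Z = 0 := by
      constructor <;> nlinarith [Real.sqrt_nonneg X, Real.sqrt_nonneg Y,
        mul_nonneg (Real.sqrt_nonneg X) (Real.sqrt_nonneg Y)]
    rw [h1.1, h1.2]
    have := Finset.sum_mul_sq_le_sq_mul_sq Finset.univ p q
    simp only [sub_zero, zero_sub]
    linarith
  · have hfac : (Real.sqrt X * Real.sqrt Y - Z) * D = X * Y - Z^2 := by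
      rw [hDdef]; linear_combination hsq
    have : (Real.sqrt X * Real.sqrt Y - Z) * D
        ≤ ((∑ i, p i^2) * (∑ i, q i^2) - (∑ i, p i * q i)^2) * D := by
      rw [hfac]; exact key2
    exact le_of_mul_le_mul_right this hDpos

theorem stronger_cauchy_schwarz (n : ℕ) (v w : Fin n → ℂ) :
    Real.sqrt (∑ i, ‖v i‖ ^ 4) * Real.sqrt (∑ i, ‖w i‖ ^ 4)
      - ∑ i, ‖v i‖ ^ 2 * ‖w i‖ ^ 2
    ≤ (∑ i, ‖v i‖ ^ 2) * (∑ i, ‖w i‖ ^ 2)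
      - ‖∑ i, (starRingEnd ℂ) (v i) * w i‖ ^ 2 := by
  have hcore := core_ineq (fun i => ‖v i‖) (fun i => ‖w i‖)
    (fun i => norm_nonneg _) (fun i => norm_nonneg _)
  have habs : ‖∑ i, (starRingEnd ℂ) (v i) * w i‖
      ≤ ∑ i, ‖v i‖ * ‖w i‖ := by
    refine (norm_sum_le _ _).trans_eq ?_
    exact Finset.sum_congr rfl fun i _ => by
      rw [norm_mul, Complex.norm_conj]
  have habs2 : ‖∑ i, (starRingEnd ℂ) (v i) * w i‖ ^ 2
      ≤ (∑ i, ‖v i‖ * ‖w i‖) ^ 2 :=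
    pow_le_pow_left₀ (norm_nonneg _) habs 2
  linarith
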